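/- Let P ⊆ ℝ^d be a finite union of closed integral unit cubes. For 0 ≤ k ≤ d set L_k(P) = Σ_{j=k}^{d} (−1)^{j+k}·binom(j,k)·N_j(P). Then for every positive integer t, #(tP ∩ ℤ^d) = Σ_{k=0}^{d} L_k(P)·t^k. In particular the lattice-point count of the dilates tP is given by a polynomial in t of degree at most d with integer coefficients. -/
import Mathlib


/-- The relatively open integral unit cube `B(v, I)`. -/
def openCube {d : ℕ} (v : Fin d → ℤ) (I : Finset (Fin d)) : Set (Fin d → ℝ) :=
  {x | ∀ i, (i ∈ I → (v i : ℝ) < x i ∧ x i < v i + 1) ∧ (i ∉ I → x i = v i)}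

/-- The closed integral unit cube `v + [0,1]^d`. -/
def closedCube {d : ℕ} (v : Fin d → ℤ) : Set (Fin d → ℝ) :=
  {x | ∀ i, (v i : ℝ) ≤ x i ∧ x i ≤ v i + 1}

/-- The set of lattice points of `ℝ^d`. -/
def latticePts (d : ℕ) : Set (Fin d → ℝ) :=
  {x | ∀ i, ∃ m : ℤ, x i = (m : ℝ)}

/-- `N_k(P)`: the number of relatively open integral unit cubes of dimension `k`
contained in `P`. -/
noncomputable def cubeCount {d : ℕ} (P : Set (Fin d → ℝ)) (k : ℕ) : ℕ :=
  {p : (Fin d → ℤ) × Finset (Fin d) | p.2.card = k ∧ openCube p.1 p.2 ⊆ P}.ncard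

namespace EhrhartProofAux

open Finset

variable {d : ℕ}

open scoped Classical in
/-- The unique cell containing a point. -/
noncomputable def cell (x : Fin d → ℝ) : (Fin d → ℤ) × Finset (Fin d) :=
  (fun i => ⌊x i⌋, Finset.univ.filter fun i => x i ≠ (⌊x i⌋ : ℝ))

lemma mem_cell (x : Fin d → ℝ) : x ∈ openCube (cell x).1 (cell x).2 := by
  classical
  intro i
  constructor
  · intro hi
    simp only [cell, Finset.mem_filter, Finset.mem_univ, true_and] at hi
    refine ⟨lt_of_le_of_ne (Int.floor_le (x i)) (Ne.symm hi), ?_⟩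
    simpa [cell] using Int.lt_floor_add_one (x i)
  · intro hi
    simp only [cell, Finset.mem_filter, Finset.mem_univ, true_and, not_not] at hi
    simpa [cell] using hi

lemma cell_eq {v : Fin d → ℤ} {I : Finset (Fin d)} {x : Fin d → ℝ}
    (h : x ∈ openCube v I) : cell x = (v, I) := by
  classical
  have hfloor : ∀ i, ⌊x i⌋ = v i := by
    intro i
    obtain ⟨h1, h2⟩ := h i
    by_cases hi : i ∈ I
    · obtain ⟨a, b⟩ := h1 hi
      exact Int.floor_eq_iff.mpr ⟨le_of_lt a, b⟩
    · rw [h2 hi]; exact Int.floor_intCast _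
  have hI : (Finset.univ.filter fun i => x i ≠ (⌊x i⌋ : ℝ)) = I := by
    ext i
    simp only [Finset.mem_filter, Finset.mem_univ, true_and]
    obtain ⟨h1, h2⟩ := h i
    constructor
    · intro hne
      by_contra hi
      exact hne (by simp [h2 hi, Int.floor_intCast])
    · intro hi
      obtain ⟨a, _⟩ := h1 hi
      rw [hfloor i]
      exact ne_of_gt a
  simp only [cell, Prod.ext_iff]
  exact ⟨funext hfloor, hI⟩

/-- The center of a cell. -/
noncomputable def center (v : Fin d → ℤ) (I : Finset (Fin d)) : Fin d → ℝ :=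
  fun i => if i ∈ I then v i + 1/2 else v i

lemma center_mem (v : Fin d → ℤ) (I : Finset (Fin d)) : center v I ∈ openCube v I := by
  intro i
  constructor
  · intro hi
    simp only [center, if_pos hi]
    constructor <;> norm_num
  · intro hi
    simp only [center, if_neg hi]

lemma openCube_subset_closedCube {v w : Fin d → ℤ} {I : Finset (Fin d)} {x : Fin d → ℝ}
    (hx : x ∈ openCube v I) (hxw : x ∈ closedCube w) :
    openCube v I ⊆ closedCube w := by
  intro y hy i
  obtain ⟨hx1, hx2⟩ := hx i
  obtain ⟨hw1, hw2⟩ := hxw i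
  obtain ⟨hy1, hy2⟩ := hy i
  by_cases hi : i ∈ I
  · obtain ⟨a1, a2⟩ := hx1 hi
    obtain ⟨b1, b2⟩ := hy1 hi
    have hvw : v i = w i := by
      have c1 : (w i : ℝ) < v i + 1 := lt_of_le_of_lt hw1 a2
      have c2 : (v i : ℝ) < w i + 1 := lt_of_lt_of_le a1 hw2
      have d1 : w i < v i + 1 := by exact_mod_cast c1
      have d2 : v i < w i + 1 := by exact_mod_cast c2
      omega
    constructor
    · rw [← hvw]; exact le_of_lt b1
    · rw [← hvw]; exact le_of_lt b2
  · have hyx : y i = x i := (hy2 hi).trans (hx2 hi).symm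
    rw [hyx]
    exact ⟨hw1, hw2⟩

lemma openCube_subset_P {S : Finset (Fin d → ℤ)} {P : Set (Fin d → ℝ)}
    (hP : P = ⋃ v ∈ S, closedCube v) {v : Fin d → ℤ} {I : Finset (Fin d)} {x : Fin d → ℝ}
    (hx : x ∈ openCube v I) (hxP : x ∈ P) :
    openCube v I ⊆ P := by
  rw [hP] at hxP ⊢
  simp only [Set.mem_iUnion] at hxP
  obtain ⟨w, hwS, hw⟩ := hxP
  intro y hy
  exact Set.mem_biUnion hwS (openCube_subset_closedCube hx hw hy)

lemma finite_Cset (S : Finset (Fin d → ℤ)) (P : Set (Fin d → ℝ))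
    (hP : P = ⋃ v ∈ S, closedCube v) :
    {p : (Fin d → ℤ) × Finset (Fin d) | openCube p.1 p.2 ⊆ P}.Finite := by
  apply Set.Finite.subset (Set.Finite.biUnion S.finite_toSet
    (fun w _ => Set.Finite.prod
      (Set.Finite.pi fun i => Set.finite_Icc (w i) (w i + 1)) Set.finite_univ))
  intro p hp
  simp only [Set.mem_setOf_eq] at hp
  have hc := center_mem p.1 p.2
  have hcP := hp hc
  rw [hP] at hcP
  simp only [Set.mem_iUnion] at hcP
  obtain ⟨w, hwS, hw⟩ := hcP
  simp only [Set.mem_iUnion]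
  refine ⟨w, hwS, ?_, Set.mem_univ _⟩
  intro i _
  have h1 := (hw i).1
  have h2 := (hw i).2
  simp only [center] at h1 h2
  constructor
  · by_cases hi : i ∈ p.2
    · rw [if_pos hi] at h1
      have : (w i : ℝ) < p.1 i + 1 := by linarith
      have : w i < p.1 i + 1 := by exact_mod_cast this
      omega
    · rw [if_neg hi] at h1
      exact_mod_cast h1
  · by_cases hi : i ∈ p.2
    · rw [if_pos hi] at h2
      have : (p.1 i : ℝ) < w i + 1 := by linarith
      have : p.1 i < w i + 1 := by exact_mod_cast this
      omega
    · rw [if_neg hi] at h2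
      exact_mod_cast h2

lemma mem_piF_iff {t : ℕ} (ht : 0 < t) (p : (Fin d → ℤ) × Finset (Fin d)) (y : Fin d → ℤ) :
    (y ∈ Fintype.piFinset fun i =>
        if i ∈ p.2 then Finset.Ioo ((t : ℤ) * p.1 i) ((t : ℤ) * p.1 i + t) else {(t : ℤ) * p.1 i})
      ↔ (fun i => (y i : ℝ) / t) ∈ openCube p.1 p.2 := by
  classical
  rw [Fintype.mem_piFinset]
  have htR : (0:ℝ) < t := by exact_mod_cast ht
  constructor
  · intro h i
    have hi := h i
    constructor
    · intro hmem
      rw [if_pos hmem, Finset.mem_Ioo] at hi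
      constructor
      · rw [lt_div_iff₀ htR]
        have : (((t : ℤ) * p.1 i : ℤ) : ℝ) < y i := by exact_mod_cast hi.1
        push_cast at this
        linarith
      · rw [div_lt_iff₀ htR]
        have : ((y i : ℤ) : ℝ) < (((t : ℤ) * p.1 i + t : ℤ) : ℝ) := by exact_mod_cast hi.2
        push_cast at this
        ring_nf
        ring_nf at this
        linarith
    · intro hmem
      rw [if_neg hmem, Finset.mem_singleton] at hi
      show (y i : ℝ) / t = (p.1 i : ℝ)
      rw [hi]
      push_cast
      field_simp
  · intro h i
    by_cases hmem : i ∈ p.2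
    · rw [if_pos hmem, Finset.mem_Ioo]
      obtain ⟨a, b⟩ := (h i).1 hmem
      rw [lt_div_iff₀ htR] at a
      rw [div_lt_iff₀ htR] at b
      constructor
      · have : (((t : ℤ) * p.1 i : ℤ) : ℝ) < y i := by push_cast; linarith
        exact_mod_cast this
      · have : ((y i : ℤ) : ℝ) < (((t : ℤ) * p.1 i + t : ℤ) : ℝ) := by push_cast; linarith
        exact_mod_cast this
    · rw [if_neg hmem, Finset.mem_singleton]
      have hv := (h i).2 hmem
      have : (y i : ℝ) = t * p.1 i := by
        field_simp at hv
        linarith [hv]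
      exact_mod_cast this

end EhrhartProofAux

open EhrhartProofAux Finset in
/-- The lattice-point count of the dilates `tP` is the polynomial
`Σ_k L_k(P) t^k` with integer coefficients
`L_k(P) = Σ_{j=k}^d (-1)^{j+k} C(j,k) N_j(P)`. -/
theorem ehrhart_polynomial (d : ℕ) (S : Finset (Fin d → ℤ))
    (P : Set (Fin d → ℝ)) (hP : P = ⋃ v ∈ S, closedCube v)
    (t : ℕ) (ht : 0 < t) :
    ((((fun x : Fin d → ℝ => (t : ℝ) • x) '' P) ∩ latticePts d).ncard : ℤ)
      = ∑ k ∈ Finset.range (d + 1),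
          (∑ j ∈ Finset.Icc k d, (-1 : ℤ) ^ (j + k) * (j.choose k : ℤ) * (cubeCount P j : ℤ))
            * (t : ℤ) ^ k := by
  classical
  have htR : (0:ℝ) < t := by exact_mod_cast ht
  have hCfin : {p : (Fin d → ℤ) × Finset (Fin d) | openCube p.1 p.2 ⊆ P}.Finite :=
    finite_Cset S P hP
  set Cfin : Finset ((Fin d → ℤ) × Finset (Fin d)) := hCfin.toFinset with hCfinDef
  set F : (Fin d → ℤ) × Finset (Fin d) → Finset (Fin d → ℤ) := fun p =>
    Fintype.piFinset fun i =>
      if i ∈ p.2 then Finset.Ioo ((t : ℤ) * p.1 i) ((t : ℤ) * p.1 i + t) else {(t : ℤ) * p.1 i}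
    with hFdef
  set Tz : Set (Fin d → ℤ) := {y | (fun i => (y i : ℝ) / t) ∈ P} with hTzDef
  set g : (Fin d → ℤ) → (Fin d → ℝ) := fun y i => (y i : ℝ) with hgDef
  have hginj : Function.Injective g := by
    intro a b h
    funext i
    have h2 : (a i : ℝ) = b i := congrFun h i
    exact_mod_cast h2
  -- Step 1 : the LHS set is the image of Tz under g
  have hTset : ((fun x : Fin d → ℝ => (t : ℝ) • x) '' P) ∩ latticePts d = g '' Tz := by
    ext z
    constructor
    · rintro ⟨⟨x, hxP, rfl⟩, hlat⟩
      choose m hm using hlat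
      have hm' : ∀ i, (t : ℝ) * x i = m i := by
        intro i
        have := hm i
        simpa [Pi.smul_apply, smul_eq_mul] using this
      refine ⟨m, ?_, ?_⟩
      · show (fun i => (m i : ℝ) / t) ∈ P
        have : (fun i => (m i : ℝ) / t) = x := by
          funext i
          rw [← hm' i]
          field_simp
        rw [this]; exact hxP
      · funext i
        simp only [g, Pi.smul_apply, smul_eq_mul]
        exact (hm' i).symm
    · rintro ⟨y, hy, rfl⟩
      refine ⟨⟨fun i => (y i : ℝ) / t, hy, ?_⟩, fun i => ⟨y i, rfl⟩⟩
      funext i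
      simp only [Pi.smul_apply, smul_eq_mul, g]
      field_simp
  -- Step 2 : Tz is the disjoint union of the F p
  have hTz_eq : Tz = ↑(Cfin.biUnion F) := by
    ext y
    simp only [hTzDef, Set.mem_setOf_eq, Finset.coe_biUnion, Set.mem_iUnion,
      Finset.mem_coe, Finset.mem_biUnion]
    constructor
    · intro hy
      set x : Fin d → ℝ := fun i => (y i : ℝ) / t with hxdef
      have hxc := mem_cell x
      have hsub := openCube_subset_P hP hxc hy
      refine ⟨cell x, ?_, ?_⟩
      · rw [hCfinDef, Set.Finite.mem_toFinset]
        exact hsub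
      · rw [mem_piF_iff ht]
        exact hxc
    · rintro ⟨p, hpC, hyp⟩
      rw [hCfinDef, Set.Finite.mem_toFinset] at hpC
      exact hpC ((mem_piF_iff ht p y).1 hyp)
  have hdisj : ∀ p ∈ Cfin, ∀ q ∈ Cfin, p ≠ q → Disjoint (F p) (F q) := by
    intro p _ q _ hpq
    rw [Finset.disjoint_left]
    intro y hyp hyq
    have h1 := (mem_piF_iff ht p y).1 hyp
    have h2 := (mem_piF_iff ht q y).1 hyq
    have e1 := cell_eq h1
    have e2 := cell_eq h2
    apply hpq
    have : (p.1, p.2) = (q.1, q.2) := e1 ▸ e2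
    simpa using this
  -- Step 3 : cardinality of each F p
  have hFcard : ∀ p : (Fin d → ℤ) × Finset (Fin d), (F p).card = (t - 1) ^ p.2.card := by
    intro p
    rw [hFdef]
    rw [Fintype.card_piFinset]
    have hcard : ∀ i, (if i ∈ p.2 then Finset.Ioo ((t : ℤ) * p.1 i) ((t : ℤ) * p.1 i + t)
        else {(t : ℤ) * p.1 i}).card = if i ∈ p.2 then t - 1 else 1 := by
      intro i
      split
      · rw [Int.card_Ioo]; omega
      · simp
    rw [Finset.prod_congr rfl fun i _ => hcard i]
    rw [Finset.prod_ite_mem, Finset.univ_inter, Finset.prod_const]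
  -- Step 4 : cubeCount as a filter card
  have hN : ∀ j, cubeCount P j = (Cfin.filter fun p => p.2.card = j).card := by
    intro j
    have hset : {p : (Fin d → ℤ) × Finset (Fin d) | p.2.card = j ∧ openCube p.1 p.2 ⊆ P}
        = ↑(Cfin.filter fun p => p.2.card = j) := by
      ext p
      simp only [Set.mem_setOf_eq, Finset.coe_filter, hCfinDef, Set.Finite.mem_toFinset,
        Set.mem_setOf_eq]
      tauto
    rw [cubeCount, hset, Set.ncard_coe_finset]
  -- Step 5 : count
  have hcount : (Cfin.biUnion F).card = ∑ j ∈ Finset.range (d + 1),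
      (Cfin.filter fun p => p.2.card = j).card * (t - 1) ^ j := by
    rw [Finset.card_biUnion hdisj]
    rw [← Finset.sum_fiberwise_of_maps_to (g := fun p => p.2.card)
      (t := Finset.range (d + 1)) (fun p _ => by
        simp only [Finset.mem_range]
        have := Finset.card_le_univ p.2
        simp only [Finset.card_fin, Fintype.card_fin] at this
        omega)]
    refine Finset.sum_congr rfl fun j _ => ?_
    rw [Finset.sum_congr rfl fun p hp => by
      rw [hFcard p, (Finset.mem_filter.1 hp).2]]
    rw [Finset.sum_const, smul_eq_mul]
  -- Combine: LHS as an integer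
  rw [hTset, Set.ncard_image_of_injective Tz hginj, hTz_eq, Set.ncard_coe_finset, hcount]
  -- cast to ℤ
  have hcast : ((∑ j ∈ Finset.range (d + 1),
      (Cfin.filter fun p => p.2.card = j).card * (t - 1) ^ j : ℕ) : ℤ)
      = ∑ j ∈ Finset.range (d + 1),
        ((Cfin.filter fun p => p.2.card = j).card : ℤ) * ((t : ℤ) - 1) ^ j := by
    push_cast [Nat.cast_sub ht]
    ring_nf
  rw [hcast]
  simp only [hN]
  push_cast
  -- Step 6 : binomial expansion and sum swap
  have hexp : ∀ j, ((t:ℤ) - 1) ^ j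
      = ∑ k ∈ Finset.range (j + 1), (-1:ℤ) ^ (j + k) * (j.choose k : ℤ) * (t:ℤ) ^ k := by
    intro j
    rw [sub_eq_add_neg, add_pow]
    refine Finset.sum_congr rfl fun k hk => ?_
    rw [Finset.mem_range] at hk
    have hkj : k ≤ j := Nat.lt_succ_iff.mp hk
    have hsign : (-1:ℤ) ^ (j - k) = (-1:ℤ) ^ (j + k) := by
      rw [show j + k = (j - k) + 2 * k by omega, pow_add, pow_mul]
      simp
    rw [hsign]
    ring
  calc ∑ j ∈ Finset.range (d + 1),
        ((Cfin.filter fun p => p.2.card = j).card : ℤ) * ((t:ℤ) - 1) ^ j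
      = ∑ j ∈ Finset.range (d + 1), ∑ k ∈ Finset.range (j + 1),
          (-1:ℤ) ^ (j + k) * (j.choose k : ℤ)
            * ((Cfin.filter fun p => p.2.card = j).card : ℤ) * (t:ℤ) ^ k := by
        refine Finset.sum_congr rfl fun j _ => ?_
        rw [hexp j, Finset.mul_sum]
        refine Finset.sum_congr rfl fun k _ => ?_
        ring
    _ = ∑ k ∈ Finset.range (d + 1), ∑ j ∈ Finset.Icc k d,
          (-1:ℤ) ^ (j + k) * (j.choose k : ℤ)
            * ((Cfin.filter fun p => p.2.card = j).card : ℤ) * (t:ℤ) ^ k := by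
        refine Finset.sum_comm' ?_
        intro j k
        simp only [Finset.mem_range, Finset.mem_Icc]
        omega
    _ = ∑ k ∈ Finset.range (d + 1),
          (∑ j ∈ Finset.Icc k d, (-1:ℤ) ^ (j + k) * (j.choose k : ℤ)
            * ((Cfin.filter fun p => p.2.card = j).card : ℤ)) * (t:ℤ) ^ k := by
        refine Finset.sum_congr rfl fun k _ => ?_
        rw [Finset.sum_mul]
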